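/- In the Poisson disorder setting with λ ≥ μ_1 - μ_0 ≥ 0, the process φ_t = λ e^{(λ+μ_0-μ_1)t} e^{N_t log(μ_1/μ_0)} ∫_0^t e^{-(λ+μ_0-μ_1)s} e^{-N_s log(μ_1/μ_0)} ds is non-decreasing in t along every sample path of the counting process N, and consequently π_t = φ_t/(1+φ_t) and Y_t = -λ + (c+λ)π_t are non-decreasing in t. -/

import Mathlib

open MeasureTheory Filter

/-- Poisson disorder, pathwise monotonicity. If `λ ≥ μ₁ - μ₀ ≥ 0`
(`λ, c > 0`, `μ₁ ≥ μ₀ > 0`) and `N : ℝ → ℕ` is a counting-process path (non-decreasing,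
`N 0 = 0`), then
`φ t = λ e^{(λ+μ₀-μ₁)t} e^{N t · log(μ₁/μ₀)} ∫_0^t e^{-(λ+μ₀-μ₁)s} e^{-N s · log(μ₁/μ₀)} ds`
is non-decreasing on `[0,∞)`, and consequently so are `π t = φ t / (1 + φ t)` and
`Y t = -λ + (c + λ) π t`. -/
theorem stmt19 (lam mu0 mu1 c : ℝ)
    (hlam : 0 < lam) (hmu0 : 0 < mu0) (hmu : mu0 ≤ mu1) (hdis : mu1 - mu0 ≤ lam)
    (hc : 0 < c)
    (N : ℝ → ℕ) (hN : Monotone N) (hN0 : N 0 = 0)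
    (φ π Y : ℝ → ℝ)
    (hφ : ∀ t, φ t = lam * Real.exp ((lam + mu0 - mu1) * t) *
      Real.exp ((N t : ℝ) * Real.log (mu1 / mu0)) *
      ∫ s in Set.Ioc (0 : ℝ) t,
        Real.exp (-(lam + mu0 - mu1) * s) * Real.exp (-(N s : ℝ) * Real.log (mu1 / mu0)))
    (hπ : ∀ t, π t = φ t / (1 + φ t))
    (hY : ∀ t, Y t = -lam + (c + lam) * π t) :
    MonotoneOn φ (Set.Ici 0) ∧ MonotoneOn π (Set.Ici 0) ∧ MonotoneOn Y (Set.Ici 0) := by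
  have hr1 : (1:ℝ) ≤ mu1/mu0 := (one_le_div hmu0).mpr hmu
  have hL0 : 0 ≤ Real.log (mu1/mu0) := Real.log_nonneg hr1
  have hk : 0 ≤ lam + mu0 - mu1 := by linarith
  set L := Real.log (mu1/mu0) with hLdef
  set g : ℝ → ℝ := fun s => Real.exp (-(lam+mu0-mu1)*s) * Real.exp (-(N s:ℝ)*L)
    with hgdef
  have hgpos : ∀ s, 0 < g s := fun s => mul_pos (Real.exp_pos _) (Real.exp_pos _)
  have hNmeas : Measurable fun s => (N s : ℝ) :=
    measurable_from_nat.comp hN.measurable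
  have hgmeas : Measurable g := by
    apply Measurable.mul
    · exact Real.measurable_exp.comp (measurable_id.const_mul _)
    · exact Real.measurable_exp.comp (hNmeas.neg.mul_const _)
  have hgint : ∀ t : ℝ, IntegrableOn g (Set.Ioc 0 t) := by
    intro t
    apply Integrable.mono' (g := fun _ => (1:ℝ))
      ((integrableOn_const_iff (C := (1:ℝ))).mpr (Or.inr measure_Ioc_lt_top))
      hgmeas.aestronglyMeasurable
    filter_upwards [ae_restrict_mem measurableSet_Ioc] with s hs
    rw [Real.norm_eq_abs, abs_of_pos (hgpos s)]
    have h1 : Real.exp (-(lam+mu0-mu1)*s) ≤ 1 := by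
      rw [Real.exp_le_one_iff]
      nlinarith [hs.1]
    have h2 : Real.exp (-(N s:ℝ)*L) ≤ 1 := by
      rw [Real.exp_le_one_iff]
      have : (0:ℝ) ≤ (N s : ℝ) := Nat.cast_nonneg _
      nlinarith
    calc g s ≤ 1 * 1 :=
      mul_le_mul h1 h2 (Real.exp_pos _).le zero_le_one
    _ = 1 := by ring
  have hInn : ∀ t : ℝ, 0 ≤ ∫ s in Set.Ioc (0:ℝ) t, g s := fun t =>
    setIntegral_nonneg measurableSet_Ioc (fun s _ => (hgpos s).le)
  have hφmono : MonotoneOn φ (Set.Ici 0) := by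
    intro t₁ _ t₂ _ h12
    rw [hφ t₁, hφ t₂]
    have hI : (∫ s in Set.Ioc (0:ℝ) t₁, g s) ≤ ∫ s in Set.Ioc (0:ℝ) t₂, g s := by
      apply setIntegral_mono_set (hgint t₂)
      · filter_upwards with s using (hgpos s).le
      · exact (Set.Ioc_subset_Ioc_right h12).eventuallyLE
    have e1 : Real.exp ((lam+mu0-mu1)*t₁) ≤ Real.exp ((lam+mu0-mu1)*t₂) :=
      Real.exp_le_exp.mpr (mul_le_mul_of_nonneg_left h12 hk)
    have e2 : Real.exp ((N t₁:ℝ)*L) ≤ Real.exp ((N t₂:ℝ)*L) :=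
      Real.exp_le_exp.mpr
        (mul_le_mul_of_nonneg_right (Nat.cast_le.mpr (hN h12)) hL0)
    calc lam * Real.exp ((lam+mu0-mu1)*t₁) * Real.exp ((N t₁:ℝ)*L) *
          ∫ s in Set.Ioc (0:ℝ) t₁, g s
        ≤ lam * Real.exp ((lam+mu0-mu1)*t₂) * Real.exp ((N t₂:ℝ)*L) *
          ∫ s in Set.Ioc (0:ℝ) t₁, g s := by
          apply mul_le_mul_of_nonneg_right _ (hInn t₁)
          exact mul_le_mul (mul_le_mul_of_nonneg_left e1 hlam.le) e2
            (Real.exp_pos _).le (by positivity)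
      _ ≤ lam * Real.exp ((lam+mu0-mu1)*t₂) * Real.exp ((N t₂:ℝ)*L) *
          ∫ s in Set.Ioc (0:ℝ) t₂, g s :=
          mul_le_mul_of_nonneg_left hI (by positivity)
  have hφnn : ∀ t, 0 ≤ φ t := by
    intro t
    rw [hφ t]
    have := hInn t
    positivity
  have hπmono : MonotoneOn π (Set.Ici 0) := by
    intro t₁ ht₁ t₂ ht₂ h12
    rw [hπ t₁, hπ t₂]
    have h := hφmono ht₁ ht₂ h12
    have h1 : (0:ℝ) < 1 + φ t₁ := by linarith [hφnn t₁]
    have h2 : (0:ℝ) < 1 + φ t₂ := by linarith [hφnn t₂]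
    rw [div_le_div_iff₀ h1 h2]
    nlinarith
  refine ⟨hφmono, hπmono, ?_⟩
  intro t₁ ht₁ t₂ ht₂ h12
  rw [hY t₁, hY t₂]
  have := hπmono ht₁ ht₂ h12
  nlinarith
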